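/- Quantitative no-go bound, pure target state (analytic core of Theorem 4.1): Let N ≥ 1 be a natural number, let ψ, φ be unit vectors in ℂ^d with |⟨ψ, φ⟩|² = 1 − 1/(4N), and let M be a Hermitian matrix on (ℂ^d)^{⊗N} with 0 ≤ M ≤ I in the Loewner order. Then (1 − Tr(M·(|φ⟩⟨φ|)^{⊗N})) + (1/(4·√N))·Tr(M·(|ψ⟩⟨ψ|)^{⊗N}) ≥ 1/(8·√N). -/

import Mathlib

open Matrix BigOperators
open scoped ComplexOrder

open Classical in
noncomputable def msqrt {n : Type*} [Fintype n] [DecidableEq n] (A : Matrix n n ℂ) :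
    Matrix n n ℂ :=
  if h : A.PosSemidef then
    (h.1.eigenvectorUnitary : Matrix n n ℂ) *
      diagonal ((↑) ∘ (√·) ∘ h.1.eigenvalues) * (star (h.1.eigenvectorUnitary : Matrix n n ℂ))
  else 0

noncomputable def traceNorm {n : Type*} [Fintype n] [DecidableEq n] (A : Matrix n n ℂ) : ℝ :=
  (msqrt (Aᴴ * A)).trace.re

noncomputable def fidelity {n : Type*} [Fintype n] [DecidableEq n] (ρ₀ ρ₁ : Matrix n n ℂ) : ℝ :=
  ((msqrt (msqrt ρ₀ * ρ₁ * msqrt ρ₀)).trace.re) ^ 2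

noncomputable def tensorPow {d : ℕ} (ρ : Matrix (Fin d) (Fin d) ℂ) (n : ℕ) :
    Matrix (Fin n → Fin d) (Fin n → Fin d) ℂ :=
  Matrix.of fun i j => ∏ k, ρ (i k) (j k)

lemma cs_dot {ι : Type*} [Fintype ι] (u w : ι → ℂ) :
    ‖star u ⬝ᵥ w‖ ≤ Real.sqrt (star u ⬝ᵥ u).re * Real.sqrt (star w ⬝ᵥ w).re := by
  have hi : ∀ a b : ι → ℂ, (inner ℂ ((WithLp.equiv 2 (ι → ℂ)).symm a)
      ((WithLp.equiv 2 (ι → ℂ)).symm b) : ℂ) = star a ⬝ᵥ b := by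
    intro a b
    simp [PiLp.inner_apply, dotProduct, Pi.star_apply, mul_comm]
  have h := norm_inner_le_norm (𝕜 := ℂ) ((WithLp.equiv 2 (ι → ℂ)).symm u)
      ((WithLp.equiv 2 (ι → ℂ)).symm w)
  have h1 : ‖(WithLp.equiv 2 (ι → ℂ)).symm u‖ = Real.sqrt (star u ⬝ᵥ u).re := by
    rw [norm_eq_sqrt_re_inner (𝕜 := ℂ), hi]; rfl
  have h2 : ‖(WithLp.equiv 2 (ι → ℂ)).symm w‖ = Real.sqrt (star w ⬝ᵥ w).re := by
    rw [norm_eq_sqrt_re_inner (𝕜 := ℂ), hi]; rfl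
  rw [hi, h1, h2] at h
  simpa using h

lemma cs_psd {n : Type*} [Fintype n] [DecidableEq n] {A : Matrix n n ℂ} (hA : A.PosSemidef)
    (x y : n → ℂ) :
    ‖star x ⬝ᵥ A *ᵥ y‖ ≤
      Real.sqrt (star x ⬝ᵥ A *ᵥ x).re * Real.sqrt (star y ⬝ᵥ A *ᵥ y).re := by
  obtain ⟨B, rfl⟩ := by
    open scoped MatrixOrder in exact CStarAlgebra.nonneg_iff_eq_star_mul_self.mp hA.nonneg
  simp only [Matrix.star_eq_conjTranspose]
  have key : ∀ a b : n → ℂ, star a ⬝ᵥ (Bᴴ * B) *ᵥ b = star (B *ᵥ a) ⬝ᵥ (B *ᵥ b) := by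
    intro a b
    rw [← Matrix.mulVec_mulVec, Matrix.dotProduct_mulVec, ← Matrix.star_mulVec]
  rw [key, key, key]
  exact cs_dot _ _

lemma tensorPow_vecMulVec {d N : ℕ} (a : Fin d → ℂ) :
    tensorPow (vecMulVec a (star a)) N
      = vecMulVec (fun i => ∏ k, a (i k)) (star fun j => ∏ k, a (j k)) := by
  ext i j
  simp [tensorPow, vecMulVec_apply, Pi.star_apply, Finset.prod_mul_distrib]

lemma trace_mul_vecMulVec {n : Type*} [Fintype n] [DecidableEq n] (M : Matrix n n ℂ)
    (a : n → ℂ) : (M * vecMulVec a (star a)).trace = star a ⬝ᵥ M *ᵥ a := by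
  simp only [Matrix.trace, Matrix.diag, Matrix.mul_apply, vecMulVec_apply, dotProduct,
    Matrix.mulVec, Pi.star_apply, Finset.mul_sum]
  exact Finset.sum_congr rfl fun i _ => Finset.sum_congr rfl fun j _ => by ring

lemma dot_pow {d N : ℕ} (a b : Fin d → ℂ) :
    star (fun i : Fin N → Fin d => ∏ k, a (i k)) ⬝ᵥ (fun j => ∏ k, b (j k))
      = (star a ⬝ᵥ b) ^ N := by
  simp only [dotProduct, Pi.star_apply, star_prod, ← Finset.prod_mul_distrib]
  rw [Finset.sum_pow' Finset.univ (fun y => star (a y) * b y) N]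
  rw [← Fintype.piFinset_univ]

lemma key_arith (v t : ℝ) (hv0 : 0 ≤ v) (ht0 : 0 ≤ t) (hv1 : v ≤ 1) (ht1 : t ≤ 1)
    (hkey : (3:ℝ)/4 ≤ (Real.sqrt t * Real.sqrt v
      + Real.sqrt (1 - t) * Real.sqrt (1 - v)) ^ 2) : v - t ≤ 1/2 := by
  have hst : Real.sqrt t ^ 2 = t := Real.sq_sqrt ht0
  have hsv : Real.sqrt v ^ 2 = v := Real.sq_sqrt hv0
  have hsu : Real.sqrt (1 - t) ^ 2 = 1 - t := Real.sq_sqrt (by linarith)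
  have hsw : Real.sqrt (1 - v) ^ 2 = 1 - v := Real.sq_sqrt (by linarith)
  nlinarith [sq_nonneg (Real.sqrt t * Real.sqrt (1 - t) - Real.sqrt v * Real.sqrt (1 - v)),
    sq_nonneg (v - t), Real.sqrt_nonneg t, Real.sqrt_nonneg v,
    Real.sqrt_nonneg (1 - t), Real.sqrt_nonneg (1 - v)]

lemma final_arith (v t s : ℝ) (hv0 : 0 ≤ v) (ht0 : 0 ≤ t) (hv1 : v ≤ 1)
    (hvt : v - t ≤ 1/2) (hs : 1 ≤ s) :
    (1 - v) + (1/(4*s)) * t ≥ 1/(8*s) := by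
  have hs0 : (0:ℝ) < s := by linarith
  rcases le_total v (1/2) with h | h
  · have h8 : 1/(8*s) ≤ 1/8 := by
      rw [div_le_div_iff₀ (by positivity) (by norm_num)]
      linarith
    have hct : 0 ≤ (1/(4*s)) * t := by positivity
    linarith
  · have hc4 : 1/(4*s) ≤ 1/4 := by
      rw [div_le_div_iff₀ (by positivity) (by norm_num)]
      linarith
    have h2 : (1:ℝ)/(8*s) = (1/(4*s))/2 := by
      rw [div_div, show (4*s)*2 = 8*s by ring]
    rw [ge_iff_le, h2]
    have hA : 0 ≤ (1/(4*s)) * (t - v + 1/2) := by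
      apply mul_nonneg (by positivity)
      linarith
    have hB : 0 ≤ (1 - v) * (1 - 1/(4*s)) := by
      apply mul_nonneg <;> linarith
    nlinarith [hA, hB]

/-- Quantitative no-go bound, pure target state. -/
theorem no_go_pure {d N : ℕ} (hN : 1 ≤ N) (ψ φ : Fin d → ℂ)
    (hψ : star ψ ⬝ᵥ ψ = 1) (hφ : star φ ⬝ᵥ φ = 1)
    (hover : ‖star ψ ⬝ᵥ φ‖ ^ 2 = 1 - 1 / (4 * N))
    (M : Matrix (Fin N → Fin d) (Fin N → Fin d) ℂ)
    (hM : M.PosSemidef) (hM' : (1 - M).PosSemidef) :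
    (1 - ((M * tensorPow (Matrix.vecMulVec φ (star φ)) N).trace).re) +
        (1 / (4 * Real.sqrt N)) *
          ((M * tensorPow (Matrix.vecMulVec ψ (star ψ)) N).trace).re ≥
      1 / (8 * Real.sqrt N) := by
  have htrφ : (M * tensorPow (Matrix.vecMulVec φ (star φ)) N).trace
      = star (fun i : Fin N → Fin d => ∏ k, φ (i k)) ⬝ᵥ M *ᵥ (fun i => ∏ k, φ (i k)) := by
    rw [tensorPow_vecMulVec, trace_mul_vecMulVec]
  have htrψ : (M * tensorPow (Matrix.vecMulVec ψ (star ψ)) N).trace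
      = star (fun i : Fin N → Fin d => ∏ k, ψ (i k)) ⬝ᵥ M *ᵥ (fun i => ∏ k, ψ (i k)) := by
    rw [tensorPow_vecMulVec, trace_mul_vecMulVec]
  rw [htrφ, htrψ]
  set Φ : (Fin N → Fin d) → ℂ := fun i => ∏ k, φ (i k) with hΦdef
  set Ψ : (Fin N → Fin d) → ℂ := fun i => ∏ k, ψ (i k) with hΨdef
  have hΦ1 : star Φ ⬝ᵥ Φ = 1 := by rw [hΦdef, dot_pow, hφ, one_pow]
  have hΨ1 : star Ψ ⬝ᵥ Ψ = 1 := by rw [hΨdef, dot_pow, hψ, one_pow]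
  set v : ℝ := (star Φ ⬝ᵥ M *ᵥ Φ).re with hvdef
  set t : ℝ := (star Ψ ⬝ᵥ M *ᵥ Ψ).re with htdef
  -- basic bounds
  have hv0 : 0 ≤ v := (Complex.le_def.mp (hM.dotProduct_mulVec_nonneg Φ)).1
  have ht0 : 0 ≤ t := (Complex.le_def.mp (hM.dotProduct_mulVec_nonneg Ψ)).1
  have hsubΦ : star Φ ⬝ᵥ (1 - M) *ᵥ Φ = 1 - star Φ ⬝ᵥ M *ᵥ Φ := by
    rw [Matrix.sub_mulVec, Matrix.one_mulVec, dotProduct_sub, hΦ1]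
  have hsubΨ : star Ψ ⬝ᵥ (1 - M) *ᵥ Ψ = 1 - star Ψ ⬝ᵥ M *ᵥ Ψ := by
    rw [Matrix.sub_mulVec, Matrix.one_mulVec, dotProduct_sub, hΨ1]
  have hv1 : v ≤ 1 := by
    have h := (Complex.le_def.mp (hM'.dotProduct_mulVec_nonneg Φ)).1
    rw [hsubΦ] at h
    simp only [Complex.zero_re, Complex.sub_re, Complex.one_re] at h
    rw [hvdef]
    linarith
  have ht1 : t ≤ 1 := by
    have h := (Complex.le_def.mp (hM'.dotProduct_mulVec_nonneg Ψ)).1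
    rw [hsubΨ] at h
    simp only [Complex.zero_re, Complex.sub_re, Complex.one_re] at h
    rw [htdef]
    linarith
  -- Cauchy-Schwarz bounds
  have ha : ‖star Ψ ⬝ᵥ M *ᵥ Φ‖ ≤ Real.sqrt t * Real.sqrt v := cs_psd hM Ψ Φ
  have hb : ‖star Ψ ⬝ᵥ (1 - M) *ᵥ Φ‖ ≤ Real.sqrt (1 - t) * Real.sqrt (1 - v) := by
    have h := cs_psd hM' Ψ Φ
    rw [hsubΦ, hsubΨ] at h
    simpa [Complex.sub_re, Complex.one_re] using h
  have hsplit : star Ψ ⬝ᵥ Φ = star Ψ ⬝ᵥ M *ᵥ Φ + star Ψ ⬝ᵥ (1 - M) *ᵥ Φ := by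
    rw [Matrix.sub_mulVec, Matrix.one_mulVec, dotProduct_sub]
    ring
  have hc0 : ‖star Ψ ⬝ᵥ Φ‖
      ≤ Real.sqrt t * Real.sqrt v + Real.sqrt (1 - t) * Real.sqrt (1 - v) := by
    calc ‖star Ψ ⬝ᵥ Φ‖
        ≤ ‖star Ψ ⬝ᵥ M *ᵥ Φ‖ + ‖star Ψ ⬝ᵥ (1 - M) *ᵥ Φ‖ := by
          rw [hsplit]; exact norm_add_le _ _
      _ ≤ _ := add_le_add ha hb
  -- fidelity lower bound
  have hNpos : (0:ℝ) < N := by exact_mod_cast Nat.lt_of_lt_of_le Nat.zero_lt_one hN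
  have hF : ‖star Ψ ⬝ᵥ Φ‖ ^ 2 = (1 - 1 / (4 * (N:ℝ))) ^ N := by
    have h : star Ψ ⬝ᵥ Φ = (star ψ ⬝ᵥ φ) ^ N := by rw [hΨdef, hΦdef, dot_pow]
    rw [h, norm_pow, ← pow_mul, mul_comm N 2, pow_mul, hover]
  have h34 : (3:ℝ)/4 ≤ (1 - 1 / (4 * (N:ℝ))) ^ N := by
    have hN1 : (1:ℝ) ≤ N := by exact_mod_cast hN
    have hle : (1:ℝ)/(4*(N:ℝ)) ≤ 1/4 := by
      rw [div_le_div_iff₀ (by positivity) (by norm_num)]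
      nlinarith
    have h := one_add_mul_le_pow (a := -(1 / (4 * (N:ℝ)))) (by linarith) N
    have heq : 1 + (N:ℝ) * -(1 / (4 * (N:ℝ))) = 3/4 := by
      field_simp
      ring
    rw [heq] at h
    simpa [sub_eq_add_neg] using h
  -- combine to key scalar inequality
  have hkey : (3:ℝ)/4 ≤ (Real.sqrt t * Real.sqrt v
      + Real.sqrt (1 - t) * Real.sqrt (1 - v)) ^ 2 := by
    calc (3:ℝ)/4 ≤ (1 - 1 / (4 * (N:ℝ))) ^ N := h34
      _ = ‖star Ψ ⬝ᵥ Φ‖ ^ 2 := hF.symm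
      _ ≤ _ := pow_le_pow_left₀ (norm_nonneg _) hc0 2
  have hvt : v - t ≤ 1/2 := key_arith v t hv0 ht0 hv1 ht1 hkey
  have hs : 1 ≤ Real.sqrt N := by
    rw [show (1:ℝ) = Real.sqrt 1 by simp]
    exact Real.sqrt_le_sqrt (by exact_mod_cast hN)
  exact final_arith v t (Real.sqrt N) hv0 ht0 hv1 hvt hs
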